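/- The only element of nℤ fixed by multiplication by nk + 1 for all k ∈ ℤ (with n ≥ 1) is 0. Consequently the limit of the diagram with single object nℤ and maps given by multiplication by nk+1 for all k ∈ ℤ is the zero group; in particular the second integral homology of the cyclic group C_n vanishes: H₂(C_n, ℤ) = 0. -/

import Mathlib

open Subgroup

/-- Kernel of the canonical free presentation `FreeGroup G ⟶ G`. -/
def presentationKer (G : Type*) [Group G] : Subgroup (FreeGroup G) :=
  (FreeGroup.lift (id : G → G)).ker

instance presentationKer_normal (G : Type*) [Group G] : (presentationKer G).Normal :=
  MonoidHom.normal_ker _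

/-- The second integral homology (Schur multiplier) `H₂(G, ℤ)` of a group `G`, defined via
the Hopf formula `([F,F] ⊓ R) / [R,F]` for the canonical free presentation
`F = FreeGroup G ⟶ G` with kernel `R`. -/
def hopfH2 (G : Type*) [Group G] : Type _ :=
  ↥(commutator (FreeGroup G) ⊓ presentationKer G) ⧸
    ((⁅presentationKer G, (⊤ : Subgroup (FreeGroup G))⁆).subgroupOf
      (commutator (FreeGroup G) ⊓ presentationKer G))

noncomputable instance (G : Type*) [Group G] : Group (hopfH2 G) := by
  unfold hopfH2; infer_instance

open scoped commutatorElement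

/-- For a cyclic group, the Hopf `H₂` vanishes. -/
lemma hopfH2_subsingleton_of_isCyclic (G : Type*) [Group G] [IsCyclic G] :
    Subsingleton (hopfH2 G) := by
  set R := presentationKer G
  set N : Subgroup (FreeGroup G) := ⁅R, (⊤ : Subgroup (FreeGroup G))⁆
  haveI : N.Normal := Subgroup.commutator_normal _ _
  -- the induced map F⧸N → G
  have hNker : N ≤ (FreeGroup.lift (id : G → G)).ker := by
    rw [Subgroup.commutator_le]
    intro g hg h _
    have hg' : FreeGroup.lift (id : G → G) g = 1 := hg
    simp [MonoidHom.mem_ker, commutatorElement_def, map_mul, map_inv, hg']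
  let φ : FreeGroup G ⧸ N →* G :=
    QuotientGroup.lift N (FreeGroup.lift (id : G → G)) hNker
  have hcentral : φ.ker ≤ Subgroup.center (FreeGroup G ⧸ N) := by
    intro q hq
    induction q using QuotientGroup.induction_on with
    | _ x =>
      have hx : x ∈ R := hq
      rw [Subgroup.mem_center_iff]
      intro q'
      induction q' using QuotientGroup.induction_on with
      | _ y =>
        have hcomm : ⁅x, y⁆ ∈ N :=
          Subgroup.commutator_mem_commutator hx (Subgroup.mem_top y)
        have h1 : ⁅(QuotientGroup.mk x : FreeGroup G ⧸ N), (QuotientGroup.mk y : FreeGroup G ⧸ N)⁆ = (1 : FreeGroup G ⧸ N) := by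
          have := (QuotientGroup.eq_one_iff (N := N) ⁅x, y⁆).2 hcomm
          simpa [commutatorElement_def] using this
        exact (commutatorElement_eq_one_iff_mul_comm.mp h1).symm
  have hab := commutative_of_cyclic_center_quotient φ hcentral
  -- hence commutator F ≤ N
  have hFF : commutator (FreeGroup G) ≤ N := by
    rw [_root_.commutator_def, Subgroup.commutator_le]
    intro g _ h _
    rw [← QuotientGroup.eq_one_iff (N := N)]
    have : (QuotientGroup.mk ⁅g, h⁆ : FreeGroup G ⧸ N)
        = ⁅(QuotientGroup.mk g : FreeGroup G ⧸ N), QuotientGroup.mk h⁆ := rfl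
    rw [this, commutatorElement_eq_one_iff_mul_comm]
    exact hab _ _
  have htop : N.subgroupOf (commutator (FreeGroup G) ⊓ R) = ⊤ := by
    rw [Subgroup.subgroupOf_eq_top]
    exact le_trans inf_le_left hFF
  unfold hopfH2
  rw [htop]
  exact QuotientGroup.subsingleton_quotient_top

/-- The only element of `nℤ` fixed by multiplication by `n*k + 1` for all `k : ℤ` is `0`
(so the limit of the one-object diagram with these maps is the zero group); consequently the
second integral homology of the cyclic group `C_n` of order `n ≥ 1` vanishes. -/
theorem stmt9 (n : ℕ) (hn : 1 ≤ n) :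
    ({x : ℤ | (↑n : ℤ) ∣ x ∧ ∀ k : ℤ, ((n : ℤ) * k + 1) * x = x} = {0}) ∧
      Subsingleton (hopfH2 (Multiplicative (ZMod n))) := by
  constructor
  · ext x
    simp only [Set.mem_setOf_eq, Set.mem_singleton_iff]
    constructor
    · rintro ⟨-, h⟩
      have h1 := h 1
      have hnx : (n : ℤ) * x = 0 := by linarith [h1]
      have hn0 : (n : ℤ) ≠ 0 := by
        have : (0:ℤ) < n := by exact_mod_cast hn
        exact this.ne'
      exact (mul_eq_zero.mp hnx).resolve_left hn0
    · rintro rfl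
      exact ⟨dvd_zero _, fun k => by ring⟩
  · exact hopfH2_subsingleton_of_isCyclic _
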